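/- arXiv:2601.21984 — 5 statements merged into one kernel-verified Lean document; each statement's English description precedes it below -/
import Mathlib

section
/- Let ι be a finite index type, a¹, a², v¹, v² : ι → ℝ families of real numbers, q ∈ ℝ, C : ι → ℝ with C_i ≠ 0 for all i, and V_OUT ∈ ℝ. Suppose (i) a¹_i + a²_i = 0 for every i, (ii) v²_i − v¹_i = a²_i · q / C_i for every i, and (iii) V_OUT + Σ_{i∈ι} (a¹_i · v¹_i + a²_i · v²_i) = 0. Then V_OUT = −q · Σ_{i∈ι} (a²_i)² / C_i. -/
/-- SSL output-impedance identity. -/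
theorem ssl_output_impedance (ι : Type*) [Fintype ι]
    (a1 a2 v1 v2 : ι → ℝ) (q : ℝ) (C : ι → ℝ) (hC : ∀ i, C i ≠ 0)
    (VOUT : ℝ)
    (hcons : ∀ i, a1 i + a2 i = 0)
    (hcap : ∀ i, v2 i - v1 i = a2 i * q / C i)
    (hbal : VOUT + ∑ i, (a1 i * v1 i + a2 i * v2 i) = 0) :
    VOUT = -q * ∑ i, (a2 i) ^ 2 / C i := by
  have key : ∀ i, a1 i * v1 i + a2 i * v2 i = q * ((a2 i) ^ 2 / C i) := by
    intro i
    have h1 : a1 i = -a2 i := by linarith [hcons i]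
    have h2 := hcap i
    have hCi := hC i
    field_simp at h2 ⊢
    rw [h1]; linear_combination a2 i * h2
  rw [Finset.sum_congr rfl (fun i _ => key i), ← Finset.mul_sum] at hbal
  linarith
end

section
/- Let ι be a nonempty finite index type, a, v : ι → ℝ with a_i ≠ 0 and v_i ≠ 0 for all i, and E > 0 a real number. Set S = Σ_{k∈ι} |a_k| · |v_k| and define C*_i = (2E / |v_i|) · (|a_i| / S) for each i. Then C*_i > 0 for all i, the energy constraint (1/2) · Σ_{i∈ι} C*_i · v_i² = E holds, and Σ_{i∈ι} a_i² / C*_i = S² / (2E). -/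
/-- Optimal capacitor sizing formula (SSL). -/
theorem ssl_optimal_sizing (ι : Type*) [Fintype ι] [Nonempty ι]
    (a v : ι → ℝ) (ha : ∀ i, a i ≠ 0) (hv : ∀ i, v i ≠ 0)
    (E : ℝ) (hE : E > 0) :
    let S := ∑ k, |a k| * |v k|
    let Cstar : ι → ℝ := fun i => (2 * E / |v i|) * (|a i| / S)
    (∀ i, Cstar i > 0) ∧
      (1 / 2) * ∑ i, Cstar i * v i ^ 2 = E ∧
      ∑ i, a i ^ 2 / Cstar i = S ^ 2 / (2 * E) := by
  intro S Cstar
  have hS : 0 < S := Finset.sum_pos (fun i _ => by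
    exact mul_pos (abs_pos.mpr (ha i)) (abs_pos.mpr (hv i))) Finset.univ_nonempty
  have hSne : S ≠ 0 := ne_of_gt hS
  refine ⟨fun i => ?_, ?_, ?_⟩
  · exact mul_pos (div_pos (by linarith) (abs_pos.mpr (hv i)))
      (div_pos (abs_pos.mpr (ha i)) hS)
  · have h1 : ∀ i, Cstar i * v i ^ 2 = 2 * E * ((|a i| * |v i|) / S) := by
      intro i
      have hvi : |v i| ≠ 0 := abs_ne_zero.mpr (hv i)
      have : v i ^ 2 = |v i| ^ 2 := (sq_abs (v i)).symm
      simp only [Cstar]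
      field_simp
      rw [this]; ring
    rw [Finset.sum_congr rfl (fun i _ => h1 i), ← Finset.mul_sum,
      ← Finset.sum_div, div_self hSne]
    ring
  · have h2 : ∀ i, a i ^ 2 / Cstar i = (|a i| * |v i|) * (S / (2 * E)) := by
      intro i
      have hvi : |v i| ≠ 0 := abs_ne_zero.mpr (hv i)
      have hai : |a i| ≠ 0 := abs_ne_zero.mpr (ha i)
      have : a i ^ 2 = |a i| ^ 2 := (sq_abs (a i)).symm
      simp only [Cstar]
      field_simp
      rw [this]
    rw [Finset.sum_congr rfl (fun i _ => h2 i), ← Finset.sum_mul]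
    show S * (S / (2 * E)) = _
    field_simp
end

section
/- Let ι be a nonempty finite index type, a, v : ι → ℝ with a_i ≠ 0 and v_i ≠ 0 for all i, and E > 0. Set S = Σ_{k∈ι} |a_k| · |v_k|. Then S² / (2E) is the least element of the set { r ∈ ℝ | ∃ C : ι → ℝ, (∀ i, C_i > 0) ∧ (1/2) · Σ_i C_i · v_i² = E ∧ r = Σ_i a_i² / C_i }. Consequently, for any M ∈ ℝ and f > 0, writing R* = S²/(2E·f) for the minimized SSL output impedance, the SSL performance metric M_SSL := (M² / R*) / (E · f) equals 2M² / S². -/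
/-- SSL Metric theorem: `S²/(2E)` is the least achievable SSL impedance
coefficient, and hence the SSL metric equals `2M²/S²`. -/
theorem ssl_metric (ι : Type*) [Fintype ι] [Nonempty ι]
    (a v : ι → ℝ) (ha : ∀ i, a i ≠ 0) (hv : ∀ i, v i ≠ 0)
    (E : ℝ) (hE : E > 0) (M f : ℝ) (hf : f > 0) :
    let S := ∑ k, |a k| * |v k|
    IsLeast
      {r : ℝ | ∃ C : ι → ℝ, (∀ i, C i > 0) ∧
        (1 / 2) * ∑ i, C i * v i ^ 2 = E ∧ r = ∑ i, a i ^ 2 / C i}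
      (S ^ 2 / (2 * E)) ∧
    (M ^ 2 / (S ^ 2 / (2 * E * f))) / (E * f) = 2 * M ^ 2 / S ^ 2 := by
  intro S
  have hpos : ∀ i, 0 < |a i| * |v i| := fun i =>
    mul_pos (abs_pos.mpr (ha i)) (abs_pos.mpr (hv i))
  have hS : 0 < S :=
    Finset.sum_pos (fun i _ => hpos i) Finset.univ_nonempty
  constructor
  · constructor
    · -- membership: take C i = 2 E |a i| / (|v i| * S)
      refine ⟨fun i => 2 * E * |a i| / (|v i| * S), fun i =>
        div_pos (mul_pos (by positivity) (abs_pos.mpr (ha i)))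
          (mul_pos (abs_pos.mpr (hv i)) hS), ?_, ?_⟩
      · have : ∀ i, (2 * E * |a i| / (|v i| * S)) * v i ^ 2
            = (2 * E / S) * (|a i| * |v i|) := by
          intro i
          have h1 : v i ^ 2 = |v i| ^ 2 := (sq_abs _).symm
          have hv' := abs_pos.mpr (hv i)
          field_simp
          rw [h1]
        rw [Finset.sum_congr rfl (fun i _ => this i), ← Finset.mul_sum]
        show (1:ℝ)/2 * (2 * E / S * S) = E
        field_simp
      · have : ∀ i, a i ^ 2 / (2 * E * |a i| / (|v i| * S))
            = (S / (2 * E)) * (|a i| * |v i|) := by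
          intro i
          have h1 : a i ^ 2 = |a i| ^ 2 := (sq_abs _).symm
          have ha' := abs_pos.mpr (ha i)
          have ha2 := ha'.ne'
          have hv' := (abs_pos.mpr (hv i)).ne'
          field_simp
          rw [h1]
        rw [Finset.sum_congr rfl (fun i _ => this i), ← Finset.mul_sum]
        show S ^ 2 / (2 * E) = S / (2 * E) * S
        ring
    · -- lower bound via Cauchy–Schwarz
      rintro r ⟨C, hC, hcon, rfl⟩
      have key : S ^ 2 ≤ (∑ i, a i ^ 2 / C i) * ∑ i, C i * v i ^ 2 := by
        have cs := Finset.sum_mul_sq_le_sq_mul_sq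
          Finset.univ (fun i => |a i| / Real.sqrt (C i))
          (fun i => Real.sqrt (C i) * |v i|)
        have h1 : ∀ i, |a i| / Real.sqrt (C i) * (Real.sqrt (C i) * |v i|)
            = |a i| * |v i| := by
          intro i
          have := Real.sqrt_pos.mpr (hC i)
          field_simp
        have h2 : ∀ i, (|a i| / Real.sqrt (C i)) ^ 2 = a i ^ 2 / C i := by
          intro i
          rw [div_pow, sq_abs, Real.sq_sqrt (hC i).le]
        have h3 : ∀ i, (Real.sqrt (C i) * |v i|) ^ 2 = C i * v i ^ 2 := by
          intro i
          rw [mul_pow, sq_abs, Real.sq_sqrt (hC i).le]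
        calc S ^ 2 = (∑ i, |a i| / Real.sqrt (C i) * (Real.sqrt (C i) * |v i|)) ^ 2 := by
              simp only [S]; rw [Finset.sum_congr rfl (fun i _ => h1 i)]
          _ ≤ (∑ i, (|a i| / Real.sqrt (C i)) ^ 2) * ∑ i, (Real.sqrt (C i) * |v i|) ^ 2 := cs
          _ = (∑ i, a i ^ 2 / C i) * ∑ i, C i * v i ^ 2 := by
              rw [Finset.sum_congr rfl (fun i _ => h2 i),
                Finset.sum_congr rfl (fun i _ => h3 i)]
      have hsum : ∑ i, C i * v i ^ 2 = 2 * E := by linarith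
      rw [hsum] at key
      rw [div_le_iff₀ (by positivity)]
      linarith [mul_comm (∑ i, a i ^ 2 / C i) (2 * E)]
  · have hS' : S ≠ 0 := ne_of_gt hS
    field_simp
end

section
/- Let ι be a nonempty finite index type, a, v : ι → ℝ with a_i ≠ 0 and v_i ≠ 0 for all i, and X > 0 a real number. Set S = Σ_{k∈ι} |a_k| · |v_k| and define G*_i = (X / |v_i|) · (|a_i| / S) for each i. Then G*_i > 0 for all i, the resource constraint Σ_{i∈ι} G*_i · v_i² = X holds, and Σ_{i∈ι} 2 · a_i² / G*_i = 2S² / X. -/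
/-- Optimal switch sizing formula (FSL). -/
theorem fsl_optimal_sizing (ι : Type*) [Fintype ι] [Nonempty ι]
    (a v : ι → ℝ) (ha : ∀ i, a i ≠ 0) (hv : ∀ i, v i ≠ 0)
    (X : ℝ) (hX : X > 0) :
    let S := ∑ k, |a k| * |v k|
    let Gstar : ι → ℝ := fun i => (X / |v i|) * (|a i| / S)
    (∀ i, Gstar i > 0) ∧
      ∑ i, Gstar i * v i ^ 2 = X ∧
      ∑ i, 2 * a i ^ 2 / Gstar i = 2 * S ^ 2 / X := by
  intro S Gstar
  have hS : 0 < S := Finset.sum_pos (fun i _ => mul_pos (abs_pos.2 (ha i)) (abs_pos.2 (hv i))) Finset.univ_nonempty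
  have hG : ∀ i, Gstar i > 0 := fun i =>
    mul_pos (div_pos hX (abs_pos.2 (hv i))) (div_pos (abs_pos.2 (ha i)) hS)
  refine ⟨hG, ?_, ?_⟩
  · have key : ∀ i, Gstar i * v i ^ 2 = (|a i| * |v i|) * (X / S) := by
      intro i
      have hvi : |v i| ≠ 0 := abs_ne_zero.2 (hv i)
      rw [← sq_abs (v i)]
      field_simp [Gstar]
      simp only [Gstar]
      field_simp
    rw [Finset.sum_congr rfl (fun i _ => key i), ← Finset.sum_mul]
    show S * (X / S) = X
    field_simp
  · have key : ∀ i, 2 * a i ^ 2 / Gstar i = (|a i| * |v i|) * (2 * S / X) := by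
      intro i
      have hai : |a i| ≠ 0 := abs_ne_zero.2 (ha i)
      have hvi : |v i| ≠ 0 := abs_ne_zero.2 (hv i)
      rw [← sq_abs (a i)]
      field_simp [Gstar]
      simp only [Gstar]
      field_simp
    rw [Finset.sum_congr rfl (fun i _ => key i), ← Finset.sum_mul]
    show S * (2 * S / X) = 2 * S ^ 2 / X
    field_simp
end

section
/- Let ι be a nonempty finite index type, a, v : ι → ℝ with a_i ≠ 0 and v_i ≠ 0 for all i, and X > 0. Set S = Σ_{k∈ι} |a_k| · |v_k|. Then 2S² / X is the least element of the set { r ∈ ℝ | ∃ G : ι → ℝ, (∀ i, G_i > 0) ∧ Σ_i G_i · v_i² = X ∧ r = Σ_i 2 · a_i² / G_i }. Consequently, for any M ∈ ℝ, writing R* = 2S²/X for the minimized FSL output impedance, the FSL performance metric M_FSL := (M² / R*) / X equals M² / (2S²). -/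
/-- FSL Metric theorem: `2S²/X` is the least achievable FSL output impedance,
and hence the FSL metric equals `M²/(2S²)`. -/
theorem fsl_metric (ι : Type*) [Fintype ι] [Nonempty ι]
    (a v : ι → ℝ) (ha : ∀ i, a i ≠ 0) (hv : ∀ i, v i ≠ 0)
    (X : ℝ) (hX : X > 0) (M : ℝ) :
    let S := ∑ k, |a k| * |v k|
    IsLeast
      {r : ℝ | ∃ G : ι → ℝ, (∀ i, G i > 0) ∧
        ∑ i, G i * v i ^ 2 = X ∧ r = ∑ i, 2 * a i ^ 2 / G i}
      (2 * S ^ 2 / X) ∧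
    (M ^ 2 / (2 * S ^ 2 / X)) / X = M ^ 2 / (2 * S ^ 2) := by
  intro S
  have hSpos : 0 < S := by
    apply Finset.sum_pos
    · intro i _
      exact mul_pos (abs_pos.mpr (ha i)) (abs_pos.mpr (hv i))
    · exact Finset.univ_nonempty
  have hSne : S ≠ 0 := ne_of_gt hSpos
  constructor
  · constructor
    · -- membership: take G i = (X/S) * |a i| / |v i|
      refine ⟨fun i => (X / S) * |a i| / |v i|, ?_, ?_, ?_⟩
      · intro i
        exact div_pos (mul_pos (div_pos hX hSpos) (abs_pos.mpr (ha i)))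
          (abs_pos.mpr (hv i))
      · have : ∀ i, ((X / S) * |a i| / |v i|) * v i ^ 2
            = (X / S) * (|a i| * |v i|) := by
          intro i
          field_simp [abs_ne_zero.mpr (hv i)]
          linear_combination (-|a i|) * abs_mul_abs_self (v i)
        rw [Finset.sum_congr rfl fun i _ => this i, ← Finset.mul_sum]
        field_simp
        rfl
      · have : ∀ i, 2 * a i ^ 2 / ((X / S) * |a i| / |v i|)
            = (2 * S / X) * (|a i| * |v i|) := by
          intro i
          field_simp [abs_ne_zero.mpr (ha i), abs_ne_zero.mpr (hv i),
            ne_of_gt hX]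
          linear_combination (-1 : ℝ) * abs_mul_abs_self (a i)
        rw [Finset.sum_congr rfl fun i _ => this i, ← Finset.mul_sum]
        field_simp
        ring
    · -- lower bound via Cauchy-Schwarz
      rintro r ⟨G, hG, hGX, rfl⟩
      have key : S ^ 2 ≤ X * ∑ i, a i ^ 2 / G i := by
        have cs := Finset.sum_mul_sq_le_sq_mul_sq Finset.univ
          (fun i => Real.sqrt (G i) * |v i|)
          (fun i => |a i| / Real.sqrt (G i))
        have e1 : ∀ i : ι, (Real.sqrt (G i) * |v i|) * (|a i| / Real.sqrt (G i))
            = |a i| * |v i| := by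
          intro i
          have : Real.sqrt (G i) ≠ 0 := ne_of_gt (Real.sqrt_pos.mpr (hG i))
          field_simp
        have e2 : ∀ i : ι, (Real.sqrt (G i) * |v i|) ^ 2 = G i * v i ^ 2 := by
          intro i
          rw [mul_pow, Real.sq_sqrt (le_of_lt (hG i)), sq_abs]
        have e3 : ∀ i : ι, (|a i| / Real.sqrt (G i)) ^ 2 = a i ^ 2 / G i := by
          intro i
          rw [div_pow, Real.sq_sqrt (le_of_lt (hG i)), sq_abs]
        calc S ^ 2 = (∑ i, (Real.sqrt (G i) * |v i|) * (|a i| / Real.sqrt (G i))) ^ 2 := by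
              rw [Finset.sum_congr rfl fun i _ => e1 i]
          _ ≤ (∑ i, (Real.sqrt (G i) * |v i|) ^ 2) * ∑ i, (|a i| / Real.sqrt (G i)) ^ 2 := cs
          _ = X * ∑ i, a i ^ 2 / G i := by
              rw [Finset.sum_congr rfl fun i _ => e2 i,
                Finset.sum_congr rfl fun i _ => e3 i, hGX]
      have hsum : ∑ i, 2 * a i ^ 2 / G i = 2 * ∑ i, a i ^ 2 / G i := by
        rw [Finset.mul_sum]
        exact Finset.sum_congr rfl fun i _ => by ring
      rw [hsum, div_le_iff₀ hX]
      nlinarith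
  · field_simp
end
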